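/- Let N ≥ 2^20 be a positive integer and suppose x1 < x2 < x3 are positive integers, each dividing N with x_i² > N (so each lattice point (x_i, y_i) with y_i = N/x_i lies strictly to the right of the center (√N, √N) of the hyperbola x·y = N). Then max over i of |x_i − y_i| is at least ⌊2·√2·N^{1/4} + 1/2⌋, where ⌊t⌋ denotes the greatest integer not exceeding t. -/

import Mathlib

set_option maxHeartbeats 1000000


theorem stmt_7 (N x1 x2 x3 : ℤ) (hN : 2 ^ 20 ≤ N)
    (hx1 : 0 < x1) (h12 : x1 < x2) (h23 : x2 < x3)
    (hd1 : x1 ∣ N) (hd2 : x2 ∣ N) (hd3 : x3 ∣ N)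
    (hr1 : N < x1 ^ 2) (hr2 : N < x2 ^ 2) (hr3 : N < x3 ^ 2) :
    ⌊2 * Real.sqrt 2 * (N : ℝ) ^ ((1 : ℝ) / 4) + 1 / 2⌋ ≤
      max |x1 - N / x1| (max |x2 - N / x2| |x3 - N / x3|) := by
  have hx2 : 0 < x2 := hx1.trans h12
  have hx3 : 0 < x3 := hx2.trans h23
  have hNpos : 0 < N := by linarith
  set y1 := N / x1 with hy1
  set y2 := N / x2 with hy2
  set y3 := N / x3 with hy3
  have e1 : x1 * y1 = N := Int.mul_ediv_cancel' hd1
  have e2 : x2 * y2 = N := Int.mul_ediv_cancel' hd2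
  have e3 : x3 * y3 = N := Int.mul_ediv_cancel' hd3
  have hy1pos : 0 < y1 := by nlinarith
  have hy2pos : 0 < y2 := by nlinarith
  have hy3pos : 0 < y3 := by nlinarith
  have hxy1 : y1 < x1 := by nlinarith
  have hxy3 : y3 < x3 := by nlinarith
  have h12N : N < x1 * x2 := by nlinarith
  have h23N : N < x2 * x3 := by nlinarith
  have key12 : x1 * x2 * (x2 + y2 - (x1 + y1)) = (x2 - x1) * (x1 * x2 - N) := by
    linear_combination x1 * e2 - x2 * e1
  have key23 : x2 * x3 * (x3 + y3 - (x2 + y2)) = (x3 - x2) * (x2 * x3 - N) := by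
    linear_combination x2 * e3 - x3 * e2
  have hs12 : x1 + y1 < x2 + y2 := by
    have hp : 0 < (x2 - x1) * (x1 * x2 - N) :=
      mul_pos (by linarith) (by linarith)
    rw [← key12] at hp
    by_contra h
    push_neg at h
    have h0 : x2 + y2 - (x1 + y1) ≤ 0 := by linarith
    nlinarith [mul_pos hx1 hx2]
  have hs23 : x2 + y2 < x3 + y3 := by
    have hp : 0 < (x3 - x2) * (x2 * x3 - N) :=
      mul_pos (by linarith) (by linarith)
    rw [← key23] at hp
    by_contra h
    push_neg at h
    have h0 : x3 + y3 - (x2 + y2) ≤ 0 := by linarith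
    nlinarith [mul_pos hx2 hx3]
  have hs3 : x1 + y1 + 2 ≤ x3 + y3 := by omega
  have hsq1 : (x1 + y1) ^ 2 = (x1 - y1) ^ 2 + 4 * N := by linear_combination 4 * e1
  have hs1lb : 4 * N + 1 ≤ (x1 + y1) ^ 2 := by
    have h1 : (1:ℤ) ^ 2 ≤ (x1 - y1) ^ 2 :=
      pow_le_pow_left₀ (by norm_num) (by linarith) 2
    linarith [hsq1, h1]
  have hsq3 : (x3 + y3) ^ 2 = (x3 - y3) ^ 2 + 4 * N := by linear_combination 4 * e3
  have hdsq : 4 * (x1 + y1) + 5 ≤ (x3 - y3) ^ 2 := by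
    have hA : (x1 + y1 + 2) ^ 2 ≤ (x3 + y3) ^ 2 :=
      pow_le_pow_left₀ (by linarith) hs3 2
    have hB : (x1 + y1 + 2) ^ 2 = (x1 + y1) ^ 2 + 4 * (x1 + y1) + 4 := by ring
    linarith [hs1lb, hsq3, hA, hB]
  -- real part
  have hNR : (0:ℝ) < (N:ℝ) := by exact_mod_cast hNpos
  have hs1R : 2 * Real.sqrt N < ((x1 + y1 : ℤ) : ℝ) := by
    have h1 : (2 * Real.sqrt N) ^ 2 = 4 * (N:ℝ) := by
      rw [mul_pow, Real.sq_sqrt hNR.le]; ring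
    have h2 : (2 * Real.sqrt N) ^ 2 < ((x1 + y1 : ℤ) : ℝ) ^ 2 := by
      rw [h1]
      have hZ : (4 * N : ℤ) < (x1 + y1) ^ 2 := by linarith
      exact_mod_cast hZ
    have hpos : (0:ℝ) ≤ ((x1 + y1 : ℤ) : ℝ) := by
      have : (0:ℤ) ≤ x1 + y1 := by linarith
      exact_mod_cast this
    exact lt_of_pow_lt_pow_left₀ 2 hpos h2
  set t : ℝ := 2 * Real.sqrt 2 * (N : ℝ) ^ ((1 : ℝ) / 4) with ht
  have htsq : t ^ 2 = 8 * Real.sqrt N := by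
    have h4 : (((N:ℝ)) ^ ((1:ℝ)/4)) ^ 2 = (N:ℝ) ^ ((1:ℝ)/2) := by
      rw [← Real.rpow_natCast ((N:ℝ) ^ ((1:ℝ)/4)) 2, ← Real.rpow_mul hNR.le]
      norm_num
    rw [ht, mul_pow, mul_pow, Real.sq_sqrt (by norm_num : (0:ℝ) ≤ 2), h4,
      Real.sqrt_eq_rpow]
    ring
  have htnn : 0 ≤ t := by positivity
  have hdR : t < ((x3 - y3 : ℤ) : ℝ) := by
    have hdsqR : 4 * ((x1 + y1 : ℤ) : ℝ) + 5 ≤ ((x3 - y3 : ℤ) : ℝ) ^ 2 := by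
      exact_mod_cast hdsq
    have h2 : t ^ 2 < ((x3 - y3 : ℤ) : ℝ) ^ 2 := by
      rw [htsq]; nlinarith [hs1R]
    have hpos : (0:ℝ) ≤ ((x3 - y3 : ℤ) : ℝ) := by
      have : (0:ℤ) ≤ x3 - y3 := by linarith
      exact_mod_cast this
    exact lt_of_pow_lt_pow_left₀ 2 hpos h2
  have hfloor : ⌊t + 1/2⌋ ≤ x3 - y3 := by
    have h1 : ⌊t + 1/2⌋ ≤ ⌊t⌋ + 1 := by
      have := Int.floor_le_floor (R := ℝ) (show t + 1/2 ≤ t + 1 by linarith)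
      simpa using this
    have h2 : ⌊t⌋ < x3 - y3 := by
      have := (Int.floor_le t).trans_lt hdR
      exact_mod_cast Int.cast_lt.mp (lt_of_le_of_lt (Int.cast_le.mpr le_rfl) this)
    omega
  calc ⌊t + 1/2⌋ ≤ x3 - y3 := hfloor
    _ = |x3 - y3| := (abs_of_nonneg (by linarith)).symm
    _ ≤ max |x1 - y1| (max |x2 - y2| |x3 - y3|) := le_max_of_le_right (le_max_right _ _)
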